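/- For 0 ≤ x ≤ 1/2, let ρ(x) be the 2×2 density matrix with entries ρ₀₀ = ρ₁₁ = 1/2 and ρ₀₁ = ρ₁₀ = x. Then the maximum of the average l₁ norm of coherence over all pure state decompositions of ρ(x) equals 1 (attained, e.g., by a decomposition into states with coherence vector (1/2, 1/2)), and for every pure state decomposition {(p_k, ψ_k)} of ρ(x) the average l₁ coherence satisfies Σ_k p_k · 2|ψ_k(0)||ψ_k(1)| ≥ 2x, with the lower bound 2x attained by some decomposition. -/

import Mathlib

open Matrix BigOperators
open scoped ComplexOrder

noncomputable section

/-- A symmetric function: invariant under all coordinate permutations. -/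
def SymmetricFn {n : ℕ} (f : (Fin n → ℝ) → ℝ) : Prop :=
  ∀ (σ : Equiv.Perm (Fin n)) (x : Fin n → ℝ), f (x ∘ σ) = f x

/-- A density matrix: positive semidefinite with trace one. -/
def IsDensityMatrix {n : ℕ} (ρ : Matrix (Fin n) (Fin n) ℂ) : Prop :=
  ρ.PosSemidef ∧ ρ.trace = 1

/-- The rank-one projection `ψ ψ*` associated to a vector `ψ ∈ ℂⁿ`. -/
def outer {n : ℕ} (ψ : Fin n → ℂ) : Matrix (Fin n) (Fin n) ℂ :=
  Matrix.vecMulVec ψ (fun i => starRingEnd ℂ (ψ i))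

/-- `(p, ψ)` is a pure state decomposition of `ρ`. -/
def IsDecomposition {n m : ℕ} (ρ : Matrix (Fin n) (Fin n) ℂ)
    (p : Fin m → ℝ) (ψ : Fin m → Fin n → ℂ) : Prop :=
  (∀ k, 0 ≤ p k) ∧ (∑ k, p k = 1) ∧ (∀ k, ∑ i, ‖ψ k i‖ ^ 2 = 1) ∧
    ρ = ∑ k, (p k : ℂ) • outer (ψ k)

/-- The coherence vector `(|ψ₀|², …, |ψ_{n-1}|²)` of a vector `ψ`. -/
def cohVec {n : ℕ} (ψ : Fin n → ℂ) : Fin n → ℝ := fun i => ‖ψ i‖ ^ 2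

/-- The average coherence of a pure state decomposition with respect to `f`. -/
def avgCoh {n m : ℕ} (f : (Fin n → ℝ) → ℝ) (p : Fin m → ℝ)
    (ψ : Fin m → Fin n → ℂ) : ℝ :=
  ∑ k, p k * f (cohVec (ψ k))


/-- For `ρ(x) = [[1/2, x], [x, 1/2]]` with `0 ≤ x ≤ 1/2`, the maximum of the
average `l₁` norm of coherence over all pure state decompositions equals `1`,
and the minimum equals `2x`. -/
theorem avg_l1_coherence_max_and_min (x : ℝ) (hx0 : 0 ≤ x) (hx1 : x ≤ 1 / 2) :
    let ρ : Matrix (Fin 2) (Fin 2) ℂ := !![1/2, (x : ℂ); (x : ℂ), 1/2]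
    IsGreatest {c : ℝ | ∃ (m : ℕ) (p : Fin m → ℝ) (ψ : Fin m → Fin 2 → ℂ),
        IsDecomposition ρ p ψ ∧
        c = ∑ k, p k * (2 * ‖ψ k 0‖ * ‖ψ k 1‖)} 1 ∧
    IsLeast {c : ℝ | ∃ (m : ℕ) (p : Fin m → ℝ) (ψ : Fin m → Fin 2 → ℂ),
        IsDecomposition ρ p ψ ∧
        c = ∑ k, p k * (2 * ‖ψ k 0‖ * ‖ψ k 1‖)} (2 * x) := by
  intro ρ
  constructor
  · constructor
    · -- 1 is attained
      refine ⟨2, ![1/2 + x, 1/2 - x],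
        ![![((Real.sqrt 2)⁻¹ : ℂ), ((Real.sqrt 2)⁻¹ : ℂ)],
          ![((Real.sqrt 2)⁻¹ : ℂ), (-(Real.sqrt 2)⁻¹ : ℂ)]], ⟨?_, ?_, ?_, ?_⟩, ?_⟩
      · intro k; fin_cases k <;> simp <;> linarith
      · simp [Fin.sum_univ_two]; ring
      · have hs : |(Real.sqrt 2)⁻¹| ^ 2 = 1/2 := by
          rw [abs_of_nonneg (by positivity), sq, ← mul_inv,
            Real.mul_self_sqrt (by norm_num)]; norm_num
        intro k; fin_cases k <;>
          simp [Fin.sum_univ_two, Complex.norm_real, hs] <;> norm_num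
      · have h2 : ((Real.sqrt 2 : ℝ) : ℂ)⁻¹ ^ 2 = 1/2 := by
          rw [sq, ← mul_inv]
          norm_cast
          rw [Real.mul_self_sqrt (by norm_num)]
          norm_num
        show ρ = _
        ext i j
        fin_cases i <;> fin_cases j <;>
          simp [ρ, outer, Matrix.vecMulVec_apply, Fin.sum_univ_two,
            Complex.conj_ofReal, -Matrix.cons_vecMulVec, -Matrix.empty_vecMulVec] <;>
          push_cast <;> ring_nf <;> rw [h2] <;> ring
      · have hs : ‖((Real.sqrt 2 : ℝ) : ℂ)⁻¹‖ = (Real.sqrt 2)⁻¹ := by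
          rw [norm_inv, Complex.norm_real, Real.norm_eq_abs,
            abs_of_nonneg (Real.sqrt_nonneg 2)]
        have h2 : (Real.sqrt 2)⁻¹ * (Real.sqrt 2)⁻¹ = 1/2 := by
          rw [← mul_inv, Real.mul_self_sqrt (by norm_num)]; norm_num
        simp [Fin.sum_univ_two, hs]
        nlinarith [h2]
    · -- upper bound
      rintro c ⟨m, p, ψ, ⟨hp, hsum, hnorm, -⟩, rfl⟩
      calc ∑ k, p k * (2 * ‖ψ k 0‖ * ‖ψ k 1‖)
          ≤ ∑ k, p k * 1 := by
            refine Finset.sum_le_sum fun k _ => ?_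
            have h := hnorm k
            rw [Fin.sum_univ_two] at h
            have : 2 * ‖ψ k 0‖ * ‖ψ k 1‖ ≤ 1 := by
              nlinarith [sq_nonneg (‖ψ k 0‖ - ‖ψ k 1‖)]
            exact mul_le_mul_of_nonneg_left this (hp k)
        _ = 1 := by simp [hsum]
  · constructor
    · -- 2x is attained
      set s := Real.sqrt (1 - 4 * x ^ 2) with hs
      have hs0 : 0 ≤ s := Real.sqrt_nonneg _
      have hs1 : s ≤ 1 := Real.sqrt_le_one.mpr (by nlinarith)
      have hss : s ^ 2 = 1 - 4 * x ^ 2 := Real.sq_sqrt (by nlinarith)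
      set a := Real.sqrt ((1 + s) / 2) with ha
      set b := Real.sqrt ((1 - s) / 2) with hb
      have ha0 : 0 ≤ a := Real.sqrt_nonneg _
      have hb0 : 0 ≤ b := Real.sqrt_nonneg _
      have ha2 : a ^ 2 = (1 + s) / 2 := Real.sq_sqrt (by linarith)
      have hb2 : b ^ 2 = (1 - s) / 2 := Real.sq_sqrt (by linarith)
      have hab : a * b = x := by
        rw [ha, hb, ← Real.sqrt_mul (by linarith)]
        rw [show (1 + s) / 2 * ((1 - s) / 2) = (1 - s ^ 2) / 4 by ring, hss]
        rw [show (1 - (1 - 4 * x ^ 2)) / 4 = x ^ 2 by ring]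
        exact Real.sqrt_sq hx0
      refine ⟨2, ![1/2, 1/2], ![![(a : ℂ), (b : ℂ)], ![(b : ℂ), (a : ℂ)]],
        ⟨?_, ?_, ?_, ?_⟩, ?_⟩
      · intro k; fin_cases k <;> norm_num
      · simp [Fin.sum_univ_two]; norm_num
      · intro k; fin_cases k <;>
          simp [Fin.sum_univ_two, Complex.norm_real, abs_of_nonneg, ha0, hb0,
            sq_abs] <;> linarith [ha2, hb2]
      · show ρ = _
        ext i j
        fin_cases i <;> fin_cases j <;>
          simp [ρ, outer, Matrix.vecMulVec_apply, Fin.sum_univ_two,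
            Complex.conj_ofReal, -Matrix.cons_vecMulVec, -Matrix.empty_vecMulVec] <;> push_cast <;> ring_nf <;> norm_cast
        all_goals first
          | (rw [ha2, hb2]; push_cast; ring)
          | nlinarith [ha2, hb2, hab]
      · have hna : ‖((a:ℝ):ℂ)‖ = a := by
          rw [Complex.norm_real, Real.norm_eq_abs, abs_of_nonneg ha0]
        have hnb : ‖((b:ℝ):ℂ)‖ = b := by
          rw [Complex.norm_real, Real.norm_eq_abs, abs_of_nonneg hb0]
        simp [Fin.sum_univ_two, hna, hnb]
        rw [abs_of_nonneg ha0, abs_of_nonneg hb0]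
        nlinarith [hab]
    · -- lower bound
      rintro c ⟨m, p, ψ, ⟨hp, hsum, hnorm, hρ⟩, rfl⟩
      have hentry : (x : ℂ) = ∑ k, (p k : ℂ) * (ψ k 0 * starRingEnd ℂ (ψ k 1)) := by
        have := congrFun (congrFun hρ 0) 1
        simpa [ρ, outer, Matrix.vecMulVec_apply, Matrix.sum_apply,
          mul_assoc] using this
      have hxn : x = ‖(x : ℂ)‖ := by
        rw [Complex.norm_real, Real.norm_eq_abs, abs_of_nonneg hx0]
      have hle : x ≤ ∑ k, p k * (‖ψ k 0‖ * ‖ψ k 1‖) := by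
        rw [hxn, hentry]
        refine le_trans (norm_sum_le _ _) ?_
        refine le_of_eq (Finset.sum_congr rfl fun k _ => ?_)
        rw [norm_mul, norm_mul, Complex.norm_real, Real.norm_eq_abs,
          abs_of_nonneg (hp k), RingHomIsometric.norm_map]
      calc 2 * x ≤ 2 * ∑ k, p k * (‖ψ k 0‖ * ‖ψ k 1‖) := by linarith
        _ = ∑ k, p k * (2 * ‖ψ k 0‖ * ‖ψ k 1‖) := by
            rw [Finset.mul_sum]; exact Finset.sum_congr rfl fun k _ => by ring
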